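/- Let f_i = x^{n_i} - a_i for i = 1, …, m be polynomials in F_q[x] with each a_i nonzero. Then gcd(f_1, …, f_m) is either 1 or of the form x^d - ∏_{i=1}^m a_i^{u_i}, where d = gcd(n_1, …, n_m) and u_1, …, u_m are integers with d = ∑ u_i n_i. -/

import Mathlib

open Polynomial

lemma aux_zpow_sum {G : Type*} [CommGroup G] {ι : Type*} (g : G) (s : Finset ι) (f : ι → ℤ) :
    g ^ (∑ i ∈ s, f i) = ∏ i ∈ s, g ^ f i := by
  classical
  induction s using Finset.induction with
  | empty => simp
  | insert _ _ h ih =>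
    rw [Finset.sum_insert h, Finset.prod_insert h, zpow_add, ih]

lemma aux_bezout {ι : Type*} [DecidableEq ι] (s : Finset ι) (n : ι → ℕ) :
    ∃ u : ι → ℤ, ((s.gcd n : ℕ) : ℤ) = ∑ i ∈ s, u i * n i := by
  classical
  induction s using Finset.induction with
  | empty => exact ⟨0, by simp⟩
  | @insert a s h ih =>
    obtain ⟨u, hu⟩ := ih
    refine ⟨fun i => if i = a then Nat.gcdA (n a) (s.gcd n)
      else Nat.gcdB (n a) (s.gcd n) * u i, ?_⟩
    rw [Finset.gcd_insert, Finset.sum_insert h]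
    have h2 : ∑ i ∈ s, (if i = a then Nat.gcdA (n a) (s.gcd n)
        else Nat.gcdB (n a) (s.gcd n) * u i) * n i
        = Nat.gcdB (n a) (s.gcd n) * ∑ i ∈ s, u i * n i := by
      rw [Finset.mul_sum]
      refine Finset.sum_congr rfl fun i hi => ?_
      rw [if_neg (by rintro rfl; exact h hi), mul_assoc]
    rw [h2, ← hu]
    simp only [if_pos]
    have : GCDMonoid.gcd (n a) (s.gcd n) = Nat.gcd (n a) (s.gcd n) := rfl
    rw [this, Nat.gcd_eq_gcd_ab]
    ring

theorem stmt3 {F : Type*} [Field F] [Fintype F] [DecidableEq F] (m : ℕ) (hm : 0 < m)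
    (n : Fin m → ℕ) (hn : ∀ i, 0 < n i) (a : Fin m → F) (ha : ∀ i, a i ≠ 0) :
    Finset.gcd Finset.univ (fun i => X ^ (n i) - C (a i)) = 1 ∨
    ∃ u : Fin m → ℤ,
      ((Finset.gcd Finset.univ n : ℕ) : ℤ) = ∑ i, u i * (n i) ∧
      Finset.gcd Finset.univ (fun i => X ^ (n i) - C (a i)) =
        X ^ (Finset.gcd Finset.univ n) - C (∏ i, a i ^ (u i)) := by
  classical
  set d := Finset.gcd Finset.univ n with hd
  set g := Finset.gcd Finset.univ (fun i => X ^ (n i) - C (a i)) with hgdef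
  by_cases h1 : g = 1
  · exact Or.inl h1
  right
  obtain ⟨u, hu⟩ := aux_bezout Finset.univ n
  refine ⟨u, hu, ?_⟩
  set c : F := ∏ i, a i ^ (u i) with hc
  have i0 : Fin m := ⟨0, hm⟩
  have hd0 : d ≠ 0 := by
    intro h
    have := Finset.gcd_eq_zero_iff.mp (hd ▸ h) i0 (Finset.mem_univ i0)
    exact (hn i0).ne' this
  have hfmono : ∀ i : Fin m, (X ^ (n i) - C (a i)).Monic :=
    fun i => monic_X_pow_sub_C (a i) (hn i).ne'
  have hg0 : g ≠ 0 := by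
    intro h
    exact (hfmono i0).ne_zero (Finset.gcd_eq_zero_iff.mp (hgdef ▸ h) i0 (Finset.mem_univ i0))
  have hgmonic : g.Monic := by
    have := Polynomial.monic_normalize (p := g) hg0
    rwa [hgdef, Finset.normalize_gcd] at this
  have hgd : ∀ i, g ∣ X ^ (n i) - C (a i) :=
    fun i => Finset.gcd_dvd (Finset.mem_univ i)
  have hgnu : ¬ IsUnit g := fun h => h1 (hgmonic.eq_one_of_isUnit h)
  -- quotient ring
  set I : Ideal F[X] := Ideal.span {g} with hI
  have hInt : I ≠ ⊤ := by
    rw [hI, Ne, Ideal.span_singleton_eq_top]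
    exact hgnu
  haveI : Nontrivial (F[X] ⧸ I) := Ideal.Quotient.nontrivial_iff.mpr hInt
  set φ : F[X] →+* F[X] ⧸ I := Ideal.Quotient.mk I with hφ
  have hzero : ∀ p : F[X], g ∣ p → φ p = 0 := fun p hp => by
    rw [hφ, Ideal.Quotient.eq_zero_iff_mem, hI, Ideal.mem_span_singleton]
    exact hp
  have hXn : ∀ i, (φ X) ^ n i = φ (C (a i)) := fun i => by
    have := hzero _ (hgd i)
    rw [map_sub, map_pow, sub_eq_zero] at this
    exact this
  have hCu : ∀ i, IsUnit (φ (C (a i))) :=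
    fun i => (isUnit_C.mpr (ha i).isUnit).map φ
  have hXu : IsUnit (φ X) := by
    refine IsUnit.of_mul_eq_one (a := φ X) ((φ X) ^ (n i0 - 1) * ↑(hCu i0).unit⁻¹) ?_
    rw [← mul_assoc, ← pow_succ']
    rw [Nat.sub_add_cancel (hn i0), hXn i0]
    exact (hCu i0).mul_val_inv
  set ξ : (F[X] ⧸ I)ˣ := hXu.unit with hξ
  set A : Fin m → Fˣ := fun i => Units.mk0 (a i) (ha i) with hA
  set ψ : Fˣ →* (F[X] ⧸ I)ˣ := Units.map (φ.comp Polynomial.C).toMonoidHom with hψ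
  have hψA : ∀ i, (ψ (A i) : F[X] ⧸ I) = φ (C (a i)) := fun i => rfl
  have hξval : (ξ : F[X] ⧸ I) = φ X := hXu.unit_spec
  have hξn : ∀ i, ξ ^ (n i) = ψ (A i) := fun i => Units.ext (by
    rw [Units.val_pow_eq_pow_val, hξval, hXn i, hψA])
  have key : ξ ^ ((d : ℕ) : ℤ) = ψ (∏ i, A i ^ u i) := by
    rw [hu, aux_zpow_sum ξ Finset.univ (fun i => u i * (n i : ℤ)), map_prod]
    refine Finset.prod_congr rfl fun i _ => ?_
    rw [map_zpow, ← hξn i, mul_comm (u i) ((n i : ℤ)), zpow_mul, zpow_natCast]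
  have hcval : ((∏ i, A i ^ u i : Fˣ) : F) = c := by
    rw [hc]
    rw [← Units.coeHom_apply, map_prod]
    refine Finset.prod_congr rfl fun i _ => ?_
    rw [Units.coeHom_apply, Units.val_zpow_eq_zpow_val, hA]
    rfl
  have hgdvd : g ∣ X ^ d - C c := by
    have h0 : φ (X ^ d - C c) = 0 := by
      rw [map_sub, map_pow, ← hξval, ← Units.val_pow_eq_pow_val, ← zpow_natCast ξ, key]
      have : (ψ (∏ i, A i ^ u i) : F[X] ⧸ I) = φ (C c) := by
        rw [hψ]
        show (φ.comp Polynomial.C) ((∏ i, A i ^ u i : Fˣ) : F) = φ (C c)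
        rw [hcval]; rfl
      rw [this, sub_self]
    rw [hφ, Ideal.Quotient.eq_zero_iff_mem, hI, Ideal.mem_span_singleton] at h0
    exact h0
  have hc0 : c ≠ 0 := by
    rw [hc]
    exact Finset.prod_ne_zero_iff.mpr fun i _ => zpow_ne_zero _ (ha i)
  -- c ^ (n i / d) = a i
  have hck : ∀ i, c ^ (n i / d) = a i := by
    intro i
    have hdvd : d ∣ n i := hd ▸ Finset.gcd_dvd (Finset.mem_univ i)
    have hmul : d * (n i / d) = n i := Nat.mul_div_cancel' hdvd
    have h2 : g ∣ X ^ (n i) - C (c ^ (n i / d)) := by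
      refine hgdvd.trans ?_
      have := sub_dvd_pow_sub_pow (X ^ d) (C c) (n i / d)
      rwa [← pow_mul, hmul, ← C_pow] at this
    have h3 : g ∣ C (a i) - C (c ^ (n i / d)) := by
      have := dvd_sub h2 (hgd i)
      have heq : X ^ n i - C (c ^ (n i / d)) - (X ^ n i - C (a i))
          = C (a i) - C (c ^ (n i / d)) := by ring
      rwa [heq] at this
    by_contra hne
    have hne' : a i - c ^ (n i / d) ≠ 0 := sub_ne_zero.mpr fun h => hne h.symm
    rw [← C_sub] at h3
    exact hgnu (isUnit_of_dvd_unit h3 (isUnit_C.mpr hne'.isUnit))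
  have hdvdg : X ^ d - C c ∣ g := by
    refine Finset.dvd_gcd fun i _ => ?_
    have hdvd : d ∣ n i := hd ▸ Finset.gcd_dvd (Finset.mem_univ i)
    have hmul : d * (n i / d) = n i := Nat.mul_div_cancel' hdvd
    have := sub_dvd_pow_sub_pow (X ^ d) (C c) (n i / d)
    rwa [← pow_mul, hmul, ← C_pow, hck i] at this
  exact eq_of_monic_of_associated hgmonic (monic_X_pow_sub_C c hd0)
    (associated_of_dvd_dvd hgdvd hdvdg)
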